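/- Let m be a positive integer, let q, δ, z_1, ..., z_m be commuting indeterminates, and set [n] := (1−q^n)/(1−q). Then ∑_{r=1}^{m} (−δ)^{r−1} [r−1]! ∑_{1≤c_1<⋯<c_r≤m} q^{∑_{p=1}^r (c_p − m)} ∏_{p=1}^{r} ( z_{c_p} · ∏_{c_p < i < c_{p+1}} (q^p + δ[p] z_i) ) = ∑_{i=1}^{m} z_i, where by convention c_{r+1} := m+1. -/

import Mathlib

noncomputable section

/-- the field of rational functions over ℚ in indeterminates q, δ and z_1, z_2, ... -/
abbrev K8 : Type := FractionRing (MvPolynomial (ℕ ⊕ Fin 2) ℚ)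

/-- the indeterminate q -/
def qv : K8 := algebraMap (MvPolynomial (ℕ ⊕ Fin 2) ℚ) K8 (MvPolynomial.X (Sum.inr 0))
/-- the indeterminate δ -/
def dv : K8 := algebraMap (MvPolynomial (ℕ ⊕ Fin 2) ℚ) K8 (MvPolynomial.X (Sum.inr 1))
/-- the indeterminate z_i -/
def zv (i : ℕ) : K8 := algebraMap (MvPolynomial (ℕ ⊕ Fin 2) ℚ) K8 (MvPolynomial.X (Sum.inl i))

/-- the q-integer [n] = (1 - q^n)/(1 - q) -/
def qint (n : ℕ) : K8 := (1 - qv ^ n) / (1 - qv)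

/-- the q-factorial [k]! with [0]! = 1 -/
def qfact (k : ℕ) : K8 := ∏ a ∈ Finset.range k, qint (a + 1)

lemma qv_ne : qv ≠ 0 := by
  intro h0
  have h := IsFractionRing.injective (MvPolynomial (ℕ ⊕ Fin 2) ℚ) K8
  have : (MvPolynomial.X (Sum.inr 0) : MvPolynomial (ℕ ⊕ Fin 2) ℚ) = 0 := by
    apply h; rw [map_zero]; exact h0
  exact MvPolynomial.X_ne_zero _ this

lemma sort_append_max {a : ℕ} {s : Finset ℕ} (h₁ : ∀ b ∈ s, b ≤ a) (h₂ : a ∉ s) :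
    (insert a s).sort (· ≤ ·) = s.sort (· ≤ ·) ++ [a] := by
  have h3 : List.Perm ((insert a s).sort (· ≤ ·)) (a :: s.sort (· ≤ ·)) := by
    rw [← Multiset.coe_eq_coe]
    rw [show ((a :: s.sort (· ≤ ·) : List ℕ) : Multiset ℕ) = a ::ₘ ↑(s.sort (· ≤ ·)) from rfl]
    rw [Finset.sort_eq, Finset.sort_eq, Finset.insert_val_of_notMem h₂]
  have h4 : List.Perm ((insert a s).sort (· ≤ ·)) (s.sort (· ≤ ·) ++ [a]) :=
    h3.trans (List.perm_append_singleton a _).symm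
  refine List.Perm.eq_of_pairwise' (Finset.pairwise_sort _ _) ?_ h4
  rw [List.pairwise_append]
  refine ⟨Finset.pairwise_sort _ _, List.pairwise_singleton _ a, ?_⟩
  intro b hb c hc
  rw [List.mem_singleton] at hc; subst hc
  exact h₁ b ((Finset.mem_sort _).1 hb)

lemma sort_getD_mem {C : Finset ℕ} {k : ℕ} (h : k < C.card) :
    (C.sort (· ≤ ·)).getD k 0 ∈ C := by
  have hl : k < (C.sort (· ≤ ·)).length := by rwa [Finset.length_sort]
  rw [List.getD_eq_getElem _ _ hl]
  exact (Finset.mem_sort _).1 (List.getElem_mem _)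

/-- the summand for a chain C -/
def trm (m r : ℕ) (C : Finset ℕ) : K8 :=
  qv ^ (∑ c ∈ C, c) * (qv ^ (r * m))⁻¹ *
    ∏ p ∈ Finset.Icc 1 r,
      (zv ((C.sort (· ≤ ·)).getD (p - 1) 0) *
        ∏ i ∈ Finset.Ioo ((C.sort (· ≤ ·)).getD (p - 1) 0)
            (if p = r then m + 1 else (C.sort (· ≤ ·)).getD p 0),
          (qv ^ p + dv * qint p * zv i))

lemma trm_old (m r : ℕ) (hr : 1 ≤ r) (C : Finset ℕ)
    (hC : C ∈ (Finset.Icc 1 m).powersetCard r) :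
    trm (m + 1) r C = trm m r C * (qv ^ r)⁻¹ * (qv ^ r + dv * qint r * zv (m + 1)) := by
  obtain ⟨r', rfl⟩ : ∃ r', r = r' + 1 := ⟨r - 1, by omega⟩
  rw [Finset.mem_powersetCard] at hC
  obtain ⟨hsub, hcard⟩ := hC
  set L := C.sort (· ≤ ·) with hL
  have hcr : L.getD r' 0 ∈ C := sort_getD_mem (by omega)
  have hcrm : L.getD r' 0 ≤ m := (Finset.mem_Icc.1 (hsub hcr)).2
  unfold trm
  rw [Finset.prod_Icc_succ_top (by omega), Finset.prod_Icc_succ_top (by omega)]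
  have hsame : ∀ p ∈ Finset.Icc 1 r',
      (zv (L.getD (p - 1) 0) *
        ∏ i ∈ Finset.Ioo (L.getD (p - 1) 0)
            (if p = r' + 1 then m + 1 + 1 else L.getD p 0), (qv ^ p + dv * qint p * zv i)) =
      (zv (L.getD (p - 1) 0) *
        ∏ i ∈ Finset.Ioo (L.getD (p - 1) 0)
            (if p = r' + 1 then m + 1 else L.getD p 0), (qv ^ p + dv * qint p * zv i)) := by
    intro p hp
    rw [Finset.mem_Icc] at hp
    rw [if_neg (by omega), if_neg (by omega)]
  rw [Finset.prod_congr rfl hsame]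
  rw [if_pos rfl, if_pos rfl]
  have hIoo : Finset.Ioo (L.getD (r' + 1 - 1) 0) (m + 1 + 1)
      = insert (m + 1) (Finset.Ioo (L.getD (r' + 1 - 1) 0) (m + 1)) := by
    ext x; simp only [Finset.mem_Ioo, Finset.mem_insert]
    simp only [Nat.add_sub_cancel] at *
    omega
  rw [hIoo, Finset.prod_insert (by simp)]
  rw [show (r' + 1) * (m + 1) = (r' + 1) * m + (r' + 1) by ring, pow_add, mul_inv]
  ring

lemma trm_new (m r' : ℕ) (hr : 1 ≤ r') (C : Finset ℕ)
    (hC : C ∈ (Finset.Icc 1 m).powersetCard r') :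
    trm (m + 1) (r' + 1) (insert (m + 1) C) = trm m r' C * (qv ^ r')⁻¹ * zv (m + 1) := by
  rw [Finset.mem_powersetCard] at hC
  obtain ⟨hsub, hcard⟩ := hC
  have hle : ∀ b ∈ C, b ≤ m + 1 := fun b hb => by
    have := (Finset.mem_Icc.1 (hsub hb)).2; omega
  have hnot : (m + 1) ∉ C := fun h => by
    have := (Finset.mem_Icc.1 (hsub h)).2; omega
  have hsort : (insert (m + 1) C).sort (· ≤ ·) = C.sort (· ≤ ·) ++ [m + 1] :=
    sort_append_max hle hnot
  have hlen : (C.sort (· ≤ ·)).length = r' := by rw [Finset.length_sort, hcard]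
  unfold trm
  rw [hsort, Finset.sum_insert hnot]
  rw [Finset.prod_Icc_succ_top (by omega)]
  -- top factor
  have htop : zv ((C.sort (· ≤ ·) ++ [m + 1]).getD (r' + 1 - 1) 0) *
      ∏ i ∈ Finset.Ioo ((C.sort (· ≤ ·) ++ [m + 1]).getD (r' + 1 - 1) 0)
          (if r' + 1 = r' + 1 then m + 1 + 1 else (C.sort (· ≤ ·) ++ [m + 1]).getD (r' + 1) 0),
        (qv ^ (r' + 1) + dv * qint (r' + 1) * zv i) = zv (m + 1) := by
    rw [if_pos rfl]
    have hg : (C.sort (· ≤ ·) ++ [m + 1]).getD (r' + 1 - 1) 0 = m + 1 := by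
      rw [Nat.add_sub_cancel, List.getD_append_right _ _ _ _ (by omega), hlen]
      simp
    rw [hg]
    have : Finset.Ioo (m + 1) (m + 1 + 1) = ∅ := by
      ext x; simp only [Finset.mem_Ioo, Finset.notMem_empty, iff_false]; omega
    rw [this, Finset.prod_empty, mul_one]
  rw [htop]
  have hsame : ∀ p ∈ Finset.Icc 1 r',
      (zv ((C.sort (· ≤ ·) ++ [m + 1]).getD (p - 1) 0) *
        ∏ i ∈ Finset.Ioo ((C.sort (· ≤ ·) ++ [m + 1]).getD (p - 1) 0)
            (if p = r' + 1 then m + 1 + 1 else (C.sort (· ≤ ·) ++ [m + 1]).getD p 0),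
          (qv ^ p + dv * qint p * zv i)) =
      (zv ((C.sort (· ≤ ·)).getD (p - 1) 0) *
        ∏ i ∈ Finset.Ioo ((C.sort (· ≤ ·)).getD (p - 1) 0)
            (if p = r' then m + 1 else (C.sort (· ≤ ·)).getD p 0),
          (qv ^ p + dv * qint p * zv i)) := by
    intro p hp
    rw [Finset.mem_Icc] at hp
    have h1 : (C.sort (· ≤ ·) ++ [m + 1]).getD (p - 1) 0 = (C.sort (· ≤ ·)).getD (p - 1) 0 :=
      List.getD_append _ _ _ _ (by omega)
    rw [h1, if_neg (by omega)]
    by_cases hpr : p = r'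
    · subst hpr
      rw [if_pos rfl, List.getD_append_right _ _ _ _ (by omega), hlen]
      simp
    · rw [if_neg hpr, List.getD_append _ _ _ _ (by omega)]
  rw [Finset.prod_congr rfl hsame]
  have hq : ∀ k : ℕ, qv ^ k ≠ 0 := fun k => pow_ne_zero k qv_ne
  set P := ∏ p ∈ Finset.Icc 1 r',
      (zv ((C.sort (· ≤ ·)).getD (p - 1) 0) *
        ∏ i ∈ Finset.Ioo ((C.sort (· ≤ ·)).getD (p - 1) 0)
            (if p = r' then m + 1 else (C.sort (· ≤ ·)).getD p 0),
          (qv ^ p + dv * qint p * zv i)) with hP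
  have e1 : (qv ^ ((r' + 1) * (m + 1)))⁻¹
      = (qv ^ (m + 1))⁻¹ * (qv ^ (r' * m))⁻¹ * (qv ^ r')⁻¹ := by
    rw [show (r' + 1) * (m + 1) = (m + 1) + r' * m + r' by ring, pow_add, pow_add,
      mul_inv, mul_inv]
  rw [e1, pow_add]
  linear_combination (qv ^ (∑ c ∈ C, c) * (qv ^ (r' * m))⁻¹ * (qv ^ r')⁻¹ * P * zv (m + 1)) *
    (mul_inv_cancel₀ (hq (m + 1)))

lemma trm_base (m : ℕ) : trm (m + 1) 1 {m + 1} = zv (m + 1) := by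
  unfold trm
  rw [Finset.Icc_self, Finset.prod_singleton, Finset.sum_singleton]
  have hs : ({m + 1} : Finset ℕ).sort (· ≤ ·) = [m + 1] := by simp
  rw [hs, if_pos rfl, show (([m + 1] : List ℕ)).getD (1 - 1) 0 = m + 1 from rfl]
  have hIoo : Finset.Ioo (m + 1) (m + 1 + 1) = ∅ := by
    ext x; simp only [Finset.mem_Ioo, Finset.notMem_empty, iff_false]; omega
  rw [hIoo, Finset.prod_empty, mul_one, Nat.one_mul]
  linear_combination zv (m + 1) * (mul_inv_cancel₀ (pow_ne_zero (m + 1) qv_ne))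

lemma coef_succ (r : ℕ) (hr : 1 ≤ r) :
    (-dv) ^ (r + 1 - 1) * qfact (r + 1 - 1)
      = (-dv) ^ (r - 1) * qfact (r - 1) * (-dv * qint r) := by
  obtain ⟨r', rfl⟩ : ∃ r', r = r' + 1 := ⟨r - 1, by omega⟩
  simp only [Nat.add_sub_cancel]
  rw [qfact, Finset.prod_range_succ, ← qfact, pow_succ]
  ring

lemma split_sum (m r' : ℕ) (f : Finset ℕ → K8) :
    ∑ C ∈ (Finset.Icc 1 (m + 1)).powersetCard (r' + 1), f C =
      (∑ C ∈ (Finset.Icc 1 m).powersetCard (r' + 1), f C) +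
      ∑ C ∈ (Finset.Icc 1 m).powersetCard r', f (insert (m + 1) C) := by
  have hnot : (m + 1) ∉ Finset.Icc 1 m := by simp
  have hins : Finset.Icc 1 (m + 1) = insert (m + 1) (Finset.Icc 1 m) := by
    ext x; simp only [Finset.mem_Icc, Finset.mem_insert]; omega
  have hmem : ∀ C ∈ (Finset.Icc 1 m).powersetCard r', (m + 1) ∉ C := by
    intro C hC h
    have h2 := (Finset.mem_powersetCard.1 hC).1 h
    rw [Finset.mem_Icc] at h2; omega
  have hdisj : Disjoint ((Finset.Icc 1 m).powersetCard (r' + 1))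
      (((Finset.Icc 1 m).powersetCard r').image (insert (m + 1))) := by
    rw [Finset.disjoint_left]
    intro C hC hC'
    obtain ⟨D, hD, rfl⟩ := Finset.mem_image.1 hC'
    have h2 := (Finset.mem_powersetCard.1 hC).1 (Finset.mem_insert_self (m + 1) D)
    rw [Finset.mem_Icc] at h2; omega
  rw [hins, Finset.powersetCard_succ_insert hnot, Finset.sum_union hdisj,
    Finset.sum_image ?_]
  intro C1 h1 C2 h2 he
  have h3 : (insert (m + 1) C1).erase (m + 1) = (insert (m + 1) C2).erase (m + 1) := by rw [he]
  rwa [Finset.erase_insert (hmem _ h1), Finset.erase_insert (hmem _ h2)] at h3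

lemma main (m : ℕ) :
    ∑ r ∈ Finset.Icc 1 m, (-dv) ^ (r - 1) * qfact (r - 1) *
        ∑ C ∈ (Finset.Icc 1 m).powersetCard r, trm m r C
      = ∑ i ∈ Finset.Icc 1 m, zv i := by
  induction m with
  | zero => simp
  | succ m ih =>
    have hq : ∀ k : ℕ, qv ^ k ≠ 0 := fun k => pow_ne_zero k qv_ne
    have h1m : 1 ≤ m + 1 := by omega
    -- step 1: split each inner sum and use trm_old / trm_new
    have h1 : ∀ r ∈ Finset.Icc 1 (m + 1),
        (-dv) ^ (r - 1) * qfact (r - 1) *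
            ∑ C ∈ (Finset.Icc 1 (m + 1)).powersetCard r, trm (m + 1) r C
          = (-dv) ^ (r - 1) * qfact (r - 1) *
              ((∑ C ∈ (Finset.Icc 1 m).powersetCard r, trm m r C) * (qv ^ r)⁻¹ *
                (qv ^ r + dv * qint r * zv (m + 1)))
            + (-dv) ^ (r - 1) * qfact (r - 1) *
              ∑ C ∈ (Finset.Icc 1 m).powersetCard (r - 1), trm (m + 1) r (insert (m + 1) C) := by
      intro r hr
      rw [Finset.mem_Icc] at hr
      obtain ⟨r', rfl⟩ : ∃ r', r = r' + 1 := ⟨r - 1, by omega⟩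
      rw [split_sum m r' (trm (m + 1) (r' + 1)), mul_add, Nat.add_sub_cancel]
      congr 2
      rw [Finset.sum_congr rfl fun C hC => trm_old m (r' + 1) (by omega) C hC,
        ← Finset.sum_mul, ← Finset.sum_mul]
    rw [Finset.sum_congr rfl h1, Finset.sum_add_distrib]
    -- step 2: first sum, drop the empty top term r = m+1
    have hPempty : (Finset.Icc 1 m).powersetCard (m + 1) = ∅ := by
      rw [Finset.powersetCard_eq_empty, Nat.card_Icc]; omega
    rw [Finset.sum_Icc_succ_top h1m]
    rw [hPempty, Finset.sum_empty, zero_mul, zero_mul, mul_zero, add_zero]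
    -- step 3: second sum, reindex r = 1 and r = r'+1
    have hre : ∀ h : ℕ → K8,
        ∑ r ∈ Finset.Icc 1 (m + 1), h r = h 1 + ∑ r ∈ Finset.Icc 1 m, h (r + 1) := by
      intro h
      have hset : Finset.Icc 1 (m + 1) = insert 1 ((Finset.Icc 1 m).image (· + 1)) := by
        ext x
        simp only [Finset.mem_Icc, Finset.mem_insert, Finset.mem_image]
        constructor
        · intro hx
          rcases Nat.eq_or_lt_of_le hx.1 with h1 | h1
          · exact Or.inl h1.symm
          · exact Or.inr ⟨x - 1, ⟨by omega, by omega⟩, by omega⟩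
        · rintro (rfl | ⟨a, ha, rfl⟩) <;> omega
      rw [hset, Finset.sum_insert ?_, Finset.sum_image ?_]
      · intro a _ b _ hab; simp only at hab; omega
      · simp only [Finset.mem_image, Finset.mem_Icc, not_exists]
        rintro a ⟨ha, h1⟩; omega
    rw [hre]
    -- the r = 1 term is zv (m+1)
    have hone : (-dv) ^ (1 - 1) * qfact (1 - 1) *
        ∑ C ∈ (Finset.Icc 1 m).powersetCard (1 - 1), trm (m + 1) 1 (insert (m + 1) C)
        = zv (m + 1) := by
      norm_num [Finset.powersetCard_zero, qfact, trm_base m]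
    rw [hone]
    -- the r+1 terms
    have h2 : ∀ r ∈ Finset.Icc 1 m,
        (-dv) ^ (r + 1 - 1) * qfact (r + 1 - 1) *
            ∑ C ∈ (Finset.Icc 1 m).powersetCard (r + 1 - 1), trm (m + 1) (r + 1) (insert (m + 1) C)
          = (-dv) ^ (r - 1) * qfact (r - 1) * (-dv * qint r) *
              ((∑ C ∈ (Finset.Icc 1 m).powersetCard r, trm m r C) * (qv ^ r)⁻¹ * zv (m + 1)) := by
      intro r hr
      rw [Finset.mem_Icc] at hr
      have hc := coef_succ r hr.1
      simp only [Nat.add_sub_cancel] at hc ⊢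
      rw [hc, Finset.sum_congr rfl fun C hC => trm_new m r hr.1 C hC,
        ← Finset.sum_mul, ← Finset.sum_mul]
    rw [Finset.sum_congr rfl h2]
    -- combine the two sums over Icc 1 m
    rw [add_comm ((∑ r ∈ Finset.Icc 1 m, _) ) _, add_assoc, ← Finset.sum_add_distrib]
    have h3 : ∀ r ∈ Finset.Icc 1 m,
        (-dv) ^ (r - 1) * qfact (r - 1) * (-dv * qint r) *
              ((∑ C ∈ (Finset.Icc 1 m).powersetCard r, trm m r C) * (qv ^ r)⁻¹ * zv (m + 1))
          + (-dv) ^ (r - 1) * qfact (r - 1) *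
            ((∑ C ∈ (Finset.Icc 1 m).powersetCard r, trm m r C) * (qv ^ r)⁻¹ *
              (qv ^ r + dv * qint r * zv (m + 1)))
          = (-dv) ^ (r - 1) * qfact (r - 1) *
              ∑ C ∈ (Finset.Icc 1 m).powersetCard r, trm m r C := by
      intro r hr
      linear_combination ((-dv) ^ (r - 1) * qfact (r - 1) *
        (∑ C ∈ (Finset.Icc 1 m).powersetCard r, trm m r C)) * mul_inv_cancel₀ (hq r)
    rw [Finset.sum_congr rfl h3, ih, Finset.sum_Icc_succ_top h1m, add_comm]

/-- ∑_{r=1}^{m} (−δ)^{r−1}[r−1]! ∑_{1≤c_1<⋯<c_r≤m} q^{∑_p (c_p−m)}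
  ∏_{p=1}^{r} ( z_{c_p} ∏_{c_p<i<c_{p+1}} (q^p + δ[p] z_i) ) = ∑_{i=1}^m z_i,
with the convention c_{r+1} := m+1. -/
theorem stmt8 (m : ℕ) (hm : 0 < m) :
    ∑ r ∈ Finset.Icc 1 m,
      (-dv) ^ (r - 1) * qfact (r - 1) *
        ∑ C ∈ (Finset.Icc 1 m).powersetCard r,
          (qv ^ (∑ c ∈ C, c) * (qv ^ (r * m))⁻¹ *
            ∏ p ∈ Finset.Icc 1 r,
              (zv ((C.sort (· ≤ ·)).getD (p - 1) 0) *
                ∏ i ∈ Finset.Ioo ((C.sort (· ≤ ·)).getD (p - 1) 0)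
                    (if p = r then m + 1 else (C.sort (· ≤ ·)).getD p 0),
                  (qv ^ p + dv * qint p * zv i))) =
    ∑ i ∈ Finset.Icc 1 m, zv i := by
  exact main m

end
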